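/- Let pE and pPI be full-support pmfs on X × Y × S such that: (i) they share the generating mechanism, i.e. pE(x|y,s) = pPI(x|y,s) for all x, y, s; (ii) under pPI, Y and S are independent, i.e. pPI(y,s) = pPI(y) · pPI(s) for all y, s; (iii) under pPI, Y and S are conditionally independent given X, i.e. pPI(x,y,s)/pPI(x) = pPI(y|x) · pPI(s|x) for all x, y, s. Then the cross-entropy risk of the pPI-posterior evaluated under pE decomposes as: −∑_{x,y} pE(x,y) · Real.log (pPI(y|x)) = −∑_y pE(y) · Real.log (pPI(y)) − ∑_{y,s} pE(y,s) · KL((x ↦ pPI(x|y,s)) ‖ (x ↦ pPI(x|s))). -/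

import Mathlib

open Finset

/-- Cross-entropy risk decomposition: for a full-support pmf `pPI` on `X × Y × S`
under which `Y ⫫ S` and `Y ⫫ S ∣ X`, and any full-support pmf `pE` sharing the
generating mechanism `p(x∣y,s)`, the cross-entropy risk of the `pPI`-posterior
evaluated under `pE` equals the risk of the `pPI`-prior minus the expected
KL-divergence `KL(pPI(·∣y,s) ‖ pPI(·∣s))` under `pE(y,s)`. -/
theorem crossEntropy_risk_decomposition
    {X Y S : Type*} [Fintype X] [Fintype Y] [Fintype S]
    [Nonempty X] [Nonempty Y] [Nonempty S]
    (pE pPI : X → Y → S → ℝ)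
    (hEpos : ∀ x y s, 0 < pE x y s) (hPIpos : ∀ x y s, 0 < pPI x y s)
    (hEsum : ∑ x, ∑ y, ∑ s, pE x y s = 1)
    (hPIsum : ∑ x, ∑ y, ∑ s, pPI x y s = 1)
    -- (i) shared generating mechanism: pE(x∣y,s) = pPI(x∣y,s)
    (hmech : ∀ x y s,
      pE x y s / (∑ x', pE x' y s) = pPI x y s / (∑ x', pPI x' y s))
    -- (ii) under pPI, Y and S are independent: pPI(y,s) = pPI(y)·pPI(s)
    (hind : ∀ y s, (∑ x, pPI x y s) =
      (∑ x, ∑ s', pPI x y s') * (∑ x, ∑ y', pPI x y' s))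
    -- (iii) under pPI, Y ⫫ S ∣ X: pPI(x,y,s)/pPI(x) = pPI(y∣x)·pPI(s∣x)
    (hcind : ∀ x y s,
      pPI x y s / (∑ y', ∑ s', pPI x y' s') =
        ((∑ s', pPI x y s') / (∑ y', ∑ s', pPI x y' s')) *
          ((∑ y', pPI x y' s) / (∑ y', ∑ s', pPI x y' s'))) :
    -- risk of the pPI posterior under pE
    -(∑ x, ∑ y, (∑ s, pE x y s) *
        Real.log ((∑ s, pPI x y s) / (∑ y', ∑ s, pPI x y' s))) =
      -- risk of the pPI prior under pE
      -(∑ y, (∑ x, ∑ s, pE x y s) * Real.log (∑ x, ∑ s, pPI x y s))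
      -- minus the expected KL divergence
      - ∑ y, ∑ s, (∑ x, pE x y s) *
          (∑ x, (pPI x y s / (∑ x', pPI x' y s)) *
            Real.log ((pPI x y s / (∑ x', pPI x' y s)) /
              ((∑ y', pPI x y' s) / (∑ x', ∑ y', pPI x' y' s)))) := by
  have hXne : (univ : Finset X).Nonempty := univ_nonempty
  have hYne : (univ : Finset Y).Nonempty := univ_nonempty
  have hSne : (univ : Finset S).Nonempty := univ_nonempty
  have pB : ∀ y s, 0 < ∑ x', pPI x' y s :=
    fun y s => sum_pos (fun x _ => hPIpos x y s) hXne
  have pEB : ∀ y s, 0 < ∑ x', pE x' y s :=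
    fun y s => sum_pos (fun x _ => hEpos x y s) hXne
  have pD : ∀ x, 0 < ∑ y', ∑ s', pPI x y' s' :=
    fun x => sum_pos (fun y _ => sum_pos (fun s _ => hPIpos x y s) hSne) hYne
  have pXY : ∀ x y, 0 < ∑ s', pPI x y s' :=
    fun x y => sum_pos (fun s _ => hPIpos x y s) hSne
  have pF : ∀ y, 0 < ∑ x', ∑ s', pPI x' y s' :=
    fun y => sum_pos (fun x _ => sum_pos (fun s _ => hPIpos x y s) hSne) hXne
  -- key ratio identity
  have key : ∀ x y s,
      (pPI x y s / (∑ x', pPI x' y s)) /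
          ((∑ y', pPI x y' s) / (∑ x', ∑ y', pPI x' y' s))
        = ((∑ s', pPI x y s') / (∑ y', ∑ s', pPI x y' s')) /
            (∑ x', ∑ s', pPI x' y s') := by
    intro x y s
    have pC : 0 < ∑ y', pPI x y' s := sum_pos (fun y _ => hPIpos x y s) hYne
    have pA : 0 < ∑ x', ∑ y', pPI x' y' s :=
      sum_pos (fun x _ => sum_pos (fun y _ => hPIpos x y s) hYne) hXne
    have pDx : 0 < ∑ y', ∑ s', pPI x y' s' := pD x
    have pBx : 0 < ∑ x', pPI x' y s := pB y s
    have pXYx : 0 < ∑ s', pPI x y s' := pXY x y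
    have pFx : 0 < ∑ x', ∑ s', pPI x' y s' := pF y
    have h1 : pPI x y s * (∑ y', ∑ s', pPI x y' s')
        = (∑ s', pPI x y s') * (∑ y', pPI x y' s) := by
      have h := hcind x y s
      field_simp at h
      apply mul_right_cancel₀ pDx.ne'
      linear_combination (∑ y', ∑ s', pPI x y' s') * h
    have h2 := hind y s
    field_simp
    rw [h2]
    ring_nf
    nlinarith [h1, pA.le, pBx.le]
  -- log of ratio splits
  have hlog : ∀ x y s,
      Real.log ((pPI x y s / (∑ x', pPI x' y s)) /
          ((∑ y', pPI x y' s) / (∑ x', ∑ y', pPI x' y' s)))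
        = Real.log ((∑ s', pPI x y s') / (∑ y', ∑ s', pPI x y' s'))
          - Real.log (∑ x', ∑ s', pPI x' y s') := by
    intro x y s
    rw [key x y s, Real.log_div (div_pos (pXY x y) (pD x)).ne' (pF y).ne']
  -- mechanism: pE(y,s) * pPI(x|y,s) = pE(x,y,s)
  have hm : ∀ x y s,
      (∑ x', pE x' y s) * (pPI x y s / (∑ x', pPI x' y s)) = pE x y s := by
    intro x y s
    rw [← hmech x y s, mul_comm, div_mul_cancel₀ _ (pEB y s).ne']
  -- main rearrangement of the KL term
  have main : (∑ y, ∑ s, (∑ x, pE x y s) *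
          (∑ x, (pPI x y s / (∑ x', pPI x' y s)) *
            Real.log ((pPI x y s / (∑ x', pPI x' y s)) /
              ((∑ y', pPI x y' s) / (∑ x', ∑ y', pPI x' y' s)))))
      = (∑ x, ∑ y, (∑ s, pE x y s) *
            Real.log ((∑ s, pPI x y s) / (∑ y', ∑ s, pPI x y' s)))
        - (∑ y, (∑ x, ∑ s, pE x y s) * Real.log (∑ x, ∑ s, pPI x y s)) := by
    have step1 : ∀ y s, (∑ x, pE x y s) *
          (∑ x, (pPI x y s / (∑ x', pPI x' y s)) *
            Real.log ((pPI x y s / (∑ x', pPI x' y s)) /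
              ((∑ y', pPI x y' s) / (∑ x', ∑ y', pPI x' y' s))))
        = ∑ x, pE x y s *
            (Real.log ((∑ s', pPI x y s') / (∑ y', ∑ s', pPI x y' s'))
              - Real.log (∑ x', ∑ s', pPI x' y s')) := by
      intro y s
      rw [mul_sum]
      refine Finset.sum_congr rfl fun x _ => ?_
      rw [← mul_assoc, hm x y s, hlog x y s]
    calc (∑ y, ∑ s, (∑ x, pE x y s) *
          (∑ x, (pPI x y s / (∑ x', pPI x' y s)) *
            Real.log ((pPI x y s / (∑ x', pPI x' y s)) /
              ((∑ y', pPI x y' s) / (∑ x', ∑ y', pPI x' y' s)))))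
        = ∑ y, ∑ s, ∑ x, pE x y s *
            (Real.log ((∑ s', pPI x y s') / (∑ y', ∑ s', pPI x y' s'))
              - Real.log (∑ x', ∑ s', pPI x' y s')) := by
          exact Finset.sum_congr rfl fun y _ => Finset.sum_congr rfl fun s _ => step1 y s
      _ = (∑ y, ∑ s, ∑ x, pE x y s *
              Real.log ((∑ s', pPI x y s') / (∑ y', ∑ s', pPI x y' s')))
          - (∑ y, ∑ s, ∑ x, pE x y s * Real.log (∑ x', ∑ s', pPI x' y s')) := by
          simp [mul_sub, Finset.sum_sub_distrib]
      _ = (∑ x, ∑ y, (∑ s, pE x y s) *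
              Real.log ((∑ s, pPI x y s) / (∑ y', ∑ s, pPI x y' s)))
          - (∑ y, (∑ x, ∑ s, pE x y s) * Real.log (∑ x, ∑ s, pPI x y s)) := by
          have swap3 : ∀ (f : X → Y → S → ℝ),
              ∑ y, ∑ s, ∑ x, f x y s = ∑ x, ∑ y, ∑ s, f x y s := by
            intro f
            calc ∑ y, ∑ s, ∑ x, f x y s
                = ∑ y, ∑ x, ∑ s, f x y s :=
                  Finset.sum_congr rfl fun y _ => Finset.sum_comm
              _ = ∑ x, ∑ y, ∑ s, f x y s := Finset.sum_comm
          congr 1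
          · rw [swap3]
            refine Finset.sum_congr rfl fun x _ => ?_
            refine Finset.sum_congr rfl fun y _ => ?_
            rw [sum_mul]
          · refine Finset.sum_congr rfl fun y _ => ?_
            calc ∑ s, ∑ x, pE x y s * Real.log (∑ x', ∑ s', pPI x' y s')
                = ∑ x, ∑ s, pE x y s * Real.log (∑ x', ∑ s', pPI x' y s') :=
                  Finset.sum_comm
              _ = ∑ x, (∑ s, pE x y s) * Real.log (∑ x', ∑ s', pPI x' y s') :=
                  Finset.sum_congr rfl fun x _ => (sum_mul _ _ _).symm
              _ = (∑ x, ∑ s, pE x y s) * Real.log (∑ x', ∑ s', pPI x' y s') :=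
                  (sum_mul _ _ _).symm
  rw [main]
  ring
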